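/- Let H be a 2-edge cover of a 2-edge-connected graph G, and let C1, C2 be two components of H each equal to a 4-cycle, say C1 = a1-a2-a3-a4-a1 and C2 = b1-b2-b3-b4-b1. Suppose G contains edges a1b1 and a2b2 (i.e., edges between consecutive vertices of C1 and consecutive vertices of C2). Then (H \ {a1a2, b1b2}) ∪ {a1b1, a2b2} is a 2-edge cover of the same size as H in which the vertices of C1 and C2 form a single 2-edge-connected component that is a cycle on 8 vertices. -/

import Mathlib

variable {V : Type*}

/-- Reachability between vertices using only edges from the edge set `F`. -/
def ReachE (F : Set (Sym2 V)) (a b : V) : Prop :=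
  Relation.ReflTransGen (fun x y => s(x, y) ∈ F) a b

/-- The set of vertices incident to at least one edge of `F`. -/
def eSupport (F : Set (Sym2 V)) : Set V :=
  {v | ∃ e ∈ F, v ∈ e}

/-- The edge set `F` is connected (as a graph on its support). -/
def ConnSet (F : Set (Sym2 V)) : Prop :=
  ∀ a ∈ eSupport F, ∀ b ∈ eSupport F, ReachE F a b

/-- The edge set `F` is a 2-edge-connected subgraph (on its support). -/
def TwoECSet (F : Set (Sym2 V)) : Prop :=
  ConnSet F ∧ ∀ a b : V, s(a, b) ∈ F → ReachE (F \ {s(a, b)}) a b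

/-- `C` is (the edge set of) a connected component of the edge set `F`. -/
def IsComponent (F C : Set (Sym2 V)) : Prop :=
  C.Nonempty ∧ C ⊆ F ∧ ConnSet C ∧
    ∀ e ∈ F, e ∉ C → ∀ v ∈ e, v ∉ eSupport C

/-- `H` is a 2-edge-connected spanning subgraph. -/
def TwoECSS (H : Set (Sym2 V)) : Prop :=
  (∀ a b : V, ReachE H a b) ∧ ∀ e ∈ H, ∀ a b : V, ReachE (H \ {e}) a b

lemma reachE_symm {F : Set (Sym2 V)} {a b : V} (h : ReachE F a b) : ReachE F b a := by
  have hs : Symmetric (fun x y : V => s(x, y) ∈ F) := by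
    intro x y hxy
    show s(y, x) ∈ F
    rwa [Sym2.eq_swap]
  exact (@Relation.ReflTransGen.stdSymm _ _ ⟨fun _ _ hxy => hs hxy⟩).symm _ _ h

lemma comp_eq_of_mem {H C1 C2 : Set (Sym2 V)} (h1 : IsComponent H C1)
    (h2 : IsComponent H C2) {v : V} (hv1 : v ∈ eSupport C1) (hv2 : v ∈ eSupport C2) :
    C1 = C2 := by
  have key : ∀ D1 D2 : Set (Sym2 V), IsComponent H D1 → IsComponent H D2 →
      ∀ w, w ∈ eSupport D1 → w ∈ eSupport D2 → D1 ⊆ D2 := by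
    intro D1 D2 hD1 hD2 w hw1 hw2 f hf
    have hreach : ∀ x, ReachE D1 w x → x ∈ eSupport D2 := by
      intro x hx
      induction hx with
      | refl => exact hw2
      | @tail b c _ hbc ih =>
        by_cases hmem : s(b, c) ∈ D2
        · exact ⟨s(b, c), hmem, Sym2.mem_mk_right b c⟩
        · exact absurd ih (hD2.2.2.2 _ (hD1.2.1 hbc) hmem b (Sym2.mem_mk_left b c))
    induction f using Sym2.ind with
    | _ x y =>
      have hx : x ∈ eSupport D1 := ⟨s(x, y), hf, Sym2.mem_mk_left x y⟩
      have hx2 : x ∈ eSupport D2 := hreach x (hD1.2.2.1 w hw1 x hx)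
      by_cases hmem : s(x, y) ∈ D2
      · exact hmem
      · exact absurd hx2 (hD2.2.2.2 _ (hD1.2.1 hf) hmem x (Sym2.mem_mk_left x y))
  exact Set.Subset.antisymm (key C1 C2 h1 h2 v hv1 hv2) (key C2 C1 h2 h1 v hv2 hv1)

set_option maxHeartbeats 1000000 in
lemma cycle8 (v1 v2 v3 v4 v5 v6 v7 v8 : V)
    (hd : List.Pairwise (· ≠ ·) [v1, v2, v3, v4, v5, v6, v7, v8])
    (C : Set (Sym2 V))
    (hC : C = {s(v1, v2), s(v2, v3), s(v3, v4), s(v4, v5), s(v5, v6), s(v6, v7), s(v7, v8), s(v8, v1)}) :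
    TwoECSet C ∧ eSupport C = {v1, v2, v3, v4, v5, v6, v7, v8} := by
  simp [List.pairwise_cons] at hd
  obtain ⟨⟨d12,d13,d14,d15,d16,d17,d18⟩, ⟨d23,d24,d25,d26,d27,d28⟩, ⟨d34,d35,d36,d37,d38⟩, ⟨d45,d46,d47,d48⟩, ⟨d56,d57,d58⟩, ⟨d67,d68⟩, d78⟩ := hd
  have d21 : v2 ≠ v1 := Ne.symm d12
  have d31 : v3 ≠ v1 := Ne.symm d13
  have d41 : v4 ≠ v1 := Ne.symm d14
  have d51 : v5 ≠ v1 := Ne.symm d15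
  have d61 : v6 ≠ v1 := Ne.symm d16
  have d71 : v7 ≠ v1 := Ne.symm d17
  have d81 : v8 ≠ v1 := Ne.symm d18
  have d32 : v3 ≠ v2 := Ne.symm d23
  have d42 : v4 ≠ v2 := Ne.symm d24
  have d52 : v5 ≠ v2 := Ne.symm d25
  have d62 : v6 ≠ v2 := Ne.symm d26
  have d72 : v7 ≠ v2 := Ne.symm d27
  have d82 : v8 ≠ v2 := Ne.symm d28
  have d43 : v4 ≠ v3 := Ne.symm d34
  have d53 : v5 ≠ v3 := Ne.symm d35
  have d63 : v6 ≠ v3 := Ne.symm d36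
  have d73 : v7 ≠ v3 := Ne.symm d37
  have d83 : v8 ≠ v3 := Ne.symm d38
  have d54 : v5 ≠ v4 := Ne.symm d45
  have d64 : v6 ≠ v4 := Ne.symm d46
  have d74 : v7 ≠ v4 := Ne.symm d47
  have d84 : v8 ≠ v4 := Ne.symm d48
  have d65 : v6 ≠ v5 := Ne.symm d56
  have d75 : v7 ≠ v5 := Ne.symm d57
  have d85 : v8 ≠ v5 := Ne.symm d58
  have d76 : v7 ≠ v6 := Ne.symm d67
  have d86 : v8 ≠ v6 := Ne.symm d68
  have d87 : v8 ≠ v7 := Ne.symm d78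
  have m_1_2 : s(v1, v2) ∈ C := by rw [hC]; simp
  have m_2_1 : s(v2, v1) ∈ C := by rw [hC]; simp [Sym2.eq_iff]
  have m_2_3 : s(v2, v3) ∈ C := by rw [hC]; simp
  have m_3_2 : s(v3, v2) ∈ C := by rw [hC]; simp [Sym2.eq_iff]
  have m_3_4 : s(v3, v4) ∈ C := by rw [hC]; simp
  have m_4_3 : s(v4, v3) ∈ C := by rw [hC]; simp [Sym2.eq_iff]
  have m_4_5 : s(v4, v5) ∈ C := by rw [hC]; simp
  have m_5_4 : s(v5, v4) ∈ C := by rw [hC]; simp [Sym2.eq_iff]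
  have m_5_6 : s(v5, v6) ∈ C := by rw [hC]; simp
  have m_6_5 : s(v6, v5) ∈ C := by rw [hC]; simp [Sym2.eq_iff]
  have m_6_7 : s(v6, v7) ∈ C := by rw [hC]; simp
  have m_7_6 : s(v7, v6) ∈ C := by rw [hC]; simp [Sym2.eq_iff]
  have m_7_8 : s(v7, v8) ∈ C := by rw [hC]; simp
  have m_8_7 : s(v8, v7) ∈ C := by rw [hC]; simp [Sym2.eq_iff]
  have m_8_1 : s(v8, v1) ∈ C := by rw [hC]; simp
  have m_1_8 : s(v1, v8) ∈ C := by rw [hC]; simp [Sym2.eq_iff]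
  have hsupp : eSupport C = {v1, v2, v3, v4, v5, v6, v7, v8} := by
    ext v
    constructor
    · rintro ⟨e, he, hv⟩
      rw [hC] at he
      simp only [Set.mem_insert_iff, Set.mem_singleton_iff] at he
      rcases he with rfl|rfl|rfl|rfl|rfl|rfl|rfl|rfl <;>
        rw [Sym2.mem_iff] at hv <;>
        rcases hv with rfl|rfl <;> simp
    · intro hv
      simp only [Set.mem_insert_iff, Set.mem_singleton_iff] at hv
      rcases hv with rfl|rfl|rfl|rfl|rfl|rfl|rfl|rfl
      exacts [⟨_, m_1_2, by simp⟩, ⟨_, m_1_2, by simp⟩, ⟨_, m_3_4, by simp⟩, ⟨_, m_3_4, by simp⟩, ⟨_, m_5_6, by simp⟩, ⟨_, m_5_6, by simp⟩, ⟨_, m_7_8, by simp⟩, ⟨_, m_7_8, by simp⟩]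
  have t2 : ReachE C v1 v2 := Relation.ReflTransGen.single m_1_2
  have t3 : ReachE C v1 v3 := t2.tail m_2_3
  have t4 : ReachE C v1 v4 := t3.tail m_3_4
  have t5 : ReachE C v1 v5 := t4.tail m_4_5
  have t6 : ReachE C v1 v6 := t5.tail m_5_6
  have t7 : ReachE C v1 v7 := t6.tail m_6_7
  have t8 : ReachE C v1 v8 := t7.tail m_7_8
  have hkey : ∀ x ∈ ({v1, v2, v3, v4, v5, v6, v7, v8} : Set V), ReachE C v1 x := by
    intro x hx
    simp only [Set.mem_insert_iff, Set.mem_singleton_iff] at hx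
    rcases hx with rfl|rfl|rfl|rfl|rfl|rfl|rfl|rfl
    exacts [Relation.ReflTransGen.refl, t2, t3, t4, t5, t6, t7, t8]
  have hconn : ConnSet C := by
    intro x hx y hy
    rw [hsupp] at hx hy
    exact (reachE_symm (hkey x hx)).trans (hkey y hy)
  have q1_1 : s(v1, v8) ∈ C \ {s(v1, v2)} :=
    ⟨m_1_8, fun hmem => (Sym2.eq_iff.mp hmem).elim (fun ⟨h1, h2⟩ => d82 h2) (fun ⟨h1, h2⟩ => d12 h1)⟩
  have q1_2 : s(v8, v7) ∈ C \ {s(v1, v2)} :=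
    ⟨m_8_7, fun hmem => (Sym2.eq_iff.mp hmem).elim (fun ⟨h1, h2⟩ => d81 h1) (fun ⟨h1, h2⟩ => d82 h1)⟩
  have q1_3 : s(v7, v6) ∈ C \ {s(v1, v2)} :=
    ⟨m_7_6, fun hmem => (Sym2.eq_iff.mp hmem).elim (fun ⟨h1, h2⟩ => d71 h1) (fun ⟨h1, h2⟩ => d72 h1)⟩
  have q1_4 : s(v6, v5) ∈ C \ {s(v1, v2)} :=
    ⟨m_6_5, fun hmem => (Sym2.eq_iff.mp hmem).elim (fun ⟨h1, h2⟩ => d61 h1) (fun ⟨h1, h2⟩ => d62 h1)⟩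
  have q1_5 : s(v5, v4) ∈ C \ {s(v1, v2)} :=
    ⟨m_5_4, fun hmem => (Sym2.eq_iff.mp hmem).elim (fun ⟨h1, h2⟩ => d51 h1) (fun ⟨h1, h2⟩ => d52 h1)⟩
  have q1_6 : s(v4, v3) ∈ C \ {s(v1, v2)} :=
    ⟨m_4_3, fun hmem => (Sym2.eq_iff.mp hmem).elim (fun ⟨h1, h2⟩ => d41 h1) (fun ⟨h1, h2⟩ => d42 h1)⟩
  have q1_7 : s(v3, v2) ∈ C \ {s(v1, v2)} :=
    ⟨m_3_2, fun hmem => (Sym2.eq_iff.mp hmem).elim (fun ⟨h1, h2⟩ => d31 h1) (fun ⟨h1, h2⟩ => d32 h1)⟩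
  have p1 : ReachE (C \ {s(v1, v2)}) v1 v2 :=
    Relation.ReflTransGen.head q1_1 (Relation.ReflTransGen.head q1_2 (Relation.ReflTransGen.head q1_3 (Relation.ReflTransGen.head q1_4 (Relation.ReflTransGen.head q1_5 (Relation.ReflTransGen.head q1_6 (Relation.ReflTransGen.single q1_7))))))
  have q2_1 : s(v2, v1) ∈ C \ {s(v2, v3)} :=
    ⟨m_2_1, fun hmem => (Sym2.eq_iff.mp hmem).elim (fun ⟨h1, h2⟩ => d13 h2) (fun ⟨h1, h2⟩ => d23 h1)⟩
  have q2_2 : s(v1, v8) ∈ C \ {s(v2, v3)} :=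
    ⟨m_1_8, fun hmem => (Sym2.eq_iff.mp hmem).elim (fun ⟨h1, h2⟩ => d12 h1) (fun ⟨h1, h2⟩ => d13 h1)⟩
  have q2_3 : s(v8, v7) ∈ C \ {s(v2, v3)} :=
    ⟨m_8_7, fun hmem => (Sym2.eq_iff.mp hmem).elim (fun ⟨h1, h2⟩ => d82 h1) (fun ⟨h1, h2⟩ => d83 h1)⟩
  have q2_4 : s(v7, v6) ∈ C \ {s(v2, v3)} :=
    ⟨m_7_6, fun hmem => (Sym2.eq_iff.mp hmem).elim (fun ⟨h1, h2⟩ => d72 h1) (fun ⟨h1, h2⟩ => d73 h1)⟩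
  have q2_5 : s(v6, v5) ∈ C \ {s(v2, v3)} :=
    ⟨m_6_5, fun hmem => (Sym2.eq_iff.mp hmem).elim (fun ⟨h1, h2⟩ => d62 h1) (fun ⟨h1, h2⟩ => d63 h1)⟩
  have q2_6 : s(v5, v4) ∈ C \ {s(v2, v3)} :=
    ⟨m_5_4, fun hmem => (Sym2.eq_iff.mp hmem).elim (fun ⟨h1, h2⟩ => d52 h1) (fun ⟨h1, h2⟩ => d53 h1)⟩
  have q2_7 : s(v4, v3) ∈ C \ {s(v2, v3)} :=
    ⟨m_4_3, fun hmem => (Sym2.eq_iff.mp hmem).elim (fun ⟨h1, h2⟩ => d42 h1) (fun ⟨h1, h2⟩ => d43 h1)⟩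
  have p2 : ReachE (C \ {s(v2, v3)}) v2 v3 :=
    Relation.ReflTransGen.head q2_1 (Relation.ReflTransGen.head q2_2 (Relation.ReflTransGen.head q2_3 (Relation.ReflTransGen.head q2_4 (Relation.ReflTransGen.head q2_5 (Relation.ReflTransGen.head q2_6 (Relation.ReflTransGen.single q2_7))))))
  have q3_1 : s(v3, v2) ∈ C \ {s(v3, v4)} :=
    ⟨m_3_2, fun hmem => (Sym2.eq_iff.mp hmem).elim (fun ⟨h1, h2⟩ => d24 h2) (fun ⟨h1, h2⟩ => d34 h1)⟩
  have q3_2 : s(v2, v1) ∈ C \ {s(v3, v4)} :=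
    ⟨m_2_1, fun hmem => (Sym2.eq_iff.mp hmem).elim (fun ⟨h1, h2⟩ => d23 h1) (fun ⟨h1, h2⟩ => d24 h1)⟩
  have q3_3 : s(v1, v8) ∈ C \ {s(v3, v4)} :=
    ⟨m_1_8, fun hmem => (Sym2.eq_iff.mp hmem).elim (fun ⟨h1, h2⟩ => d13 h1) (fun ⟨h1, h2⟩ => d14 h1)⟩
  have q3_4 : s(v8, v7) ∈ C \ {s(v3, v4)} :=
    ⟨m_8_7, fun hmem => (Sym2.eq_iff.mp hmem).elim (fun ⟨h1, h2⟩ => d83 h1) (fun ⟨h1, h2⟩ => d84 h1)⟩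
  have q3_5 : s(v7, v6) ∈ C \ {s(v3, v4)} :=
    ⟨m_7_6, fun hmem => (Sym2.eq_iff.mp hmem).elim (fun ⟨h1, h2⟩ => d73 h1) (fun ⟨h1, h2⟩ => d74 h1)⟩
  have q3_6 : s(v6, v5) ∈ C \ {s(v3, v4)} :=
    ⟨m_6_5, fun hmem => (Sym2.eq_iff.mp hmem).elim (fun ⟨h1, h2⟩ => d63 h1) (fun ⟨h1, h2⟩ => d64 h1)⟩
  have q3_7 : s(v5, v4) ∈ C \ {s(v3, v4)} :=
    ⟨m_5_4, fun hmem => (Sym2.eq_iff.mp hmem).elim (fun ⟨h1, h2⟩ => d53 h1) (fun ⟨h1, h2⟩ => d54 h1)⟩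
  have p3 : ReachE (C \ {s(v3, v4)}) v3 v4 :=
    Relation.ReflTransGen.head q3_1 (Relation.ReflTransGen.head q3_2 (Relation.ReflTransGen.head q3_3 (Relation.ReflTransGen.head q3_4 (Relation.ReflTransGen.head q3_5 (Relation.ReflTransGen.head q3_6 (Relation.ReflTransGen.single q3_7))))))
  have q4_1 : s(v4, v3) ∈ C \ {s(v4, v5)} :=
    ⟨m_4_3, fun hmem => (Sym2.eq_iff.mp hmem).elim (fun ⟨h1, h2⟩ => d35 h2) (fun ⟨h1, h2⟩ => d45 h1)⟩
  have q4_2 : s(v3, v2) ∈ C \ {s(v4, v5)} :=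
    ⟨m_3_2, fun hmem => (Sym2.eq_iff.mp hmem).elim (fun ⟨h1, h2⟩ => d34 h1) (fun ⟨h1, h2⟩ => d35 h1)⟩
  have q4_3 : s(v2, v1) ∈ C \ {s(v4, v5)} :=
    ⟨m_2_1, fun hmem => (Sym2.eq_iff.mp hmem).elim (fun ⟨h1, h2⟩ => d24 h1) (fun ⟨h1, h2⟩ => d25 h1)⟩
  have q4_4 : s(v1, v8) ∈ C \ {s(v4, v5)} :=
    ⟨m_1_8, fun hmem => (Sym2.eq_iff.mp hmem).elim (fun ⟨h1, h2⟩ => d14 h1) (fun ⟨h1, h2⟩ => d15 h1)⟩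
  have q4_5 : s(v8, v7) ∈ C \ {s(v4, v5)} :=
    ⟨m_8_7, fun hmem => (Sym2.eq_iff.mp hmem).elim (fun ⟨h1, h2⟩ => d84 h1) (fun ⟨h1, h2⟩ => d85 h1)⟩
  have q4_6 : s(v7, v6) ∈ C \ {s(v4, v5)} :=
    ⟨m_7_6, fun hmem => (Sym2.eq_iff.mp hmem).elim (fun ⟨h1, h2⟩ => d74 h1) (fun ⟨h1, h2⟩ => d75 h1)⟩
  have q4_7 : s(v6, v5) ∈ C \ {s(v4, v5)} :=
    ⟨m_6_5, fun hmem => (Sym2.eq_iff.mp hmem).elim (fun ⟨h1, h2⟩ => d64 h1) (fun ⟨h1, h2⟩ => d65 h1)⟩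
  have p4 : ReachE (C \ {s(v4, v5)}) v4 v5 :=
    Relation.ReflTransGen.head q4_1 (Relation.ReflTransGen.head q4_2 (Relation.ReflTransGen.head q4_3 (Relation.ReflTransGen.head q4_4 (Relation.ReflTransGen.head q4_5 (Relation.ReflTransGen.head q4_6 (Relation.ReflTransGen.single q4_7))))))
  have q5_1 : s(v5, v4) ∈ C \ {s(v5, v6)} :=
    ⟨m_5_4, fun hmem => (Sym2.eq_iff.mp hmem).elim (fun ⟨h1, h2⟩ => d46 h2) (fun ⟨h1, h2⟩ => d56 h1)⟩
  have q5_2 : s(v4, v3) ∈ C \ {s(v5, v6)} :=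
    ⟨m_4_3, fun hmem => (Sym2.eq_iff.mp hmem).elim (fun ⟨h1, h2⟩ => d45 h1) (fun ⟨h1, h2⟩ => d46 h1)⟩
  have q5_3 : s(v3, v2) ∈ C \ {s(v5, v6)} :=
    ⟨m_3_2, fun hmem => (Sym2.eq_iff.mp hmem).elim (fun ⟨h1, h2⟩ => d35 h1) (fun ⟨h1, h2⟩ => d36 h1)⟩
  have q5_4 : s(v2, v1) ∈ C \ {s(v5, v6)} :=
    ⟨m_2_1, fun hmem => (Sym2.eq_iff.mp hmem).elim (fun ⟨h1, h2⟩ => d25 h1) (fun ⟨h1, h2⟩ => d26 h1)⟩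
  have q5_5 : s(v1, v8) ∈ C \ {s(v5, v6)} :=
    ⟨m_1_8, fun hmem => (Sym2.eq_iff.mp hmem).elim (fun ⟨h1, h2⟩ => d15 h1) (fun ⟨h1, h2⟩ => d16 h1)⟩
  have q5_6 : s(v8, v7) ∈ C \ {s(v5, v6)} :=
    ⟨m_8_7, fun hmem => (Sym2.eq_iff.mp hmem).elim (fun ⟨h1, h2⟩ => d85 h1) (fun ⟨h1, h2⟩ => d86 h1)⟩
  have q5_7 : s(v7, v6) ∈ C \ {s(v5, v6)} :=
    ⟨m_7_6, fun hmem => (Sym2.eq_iff.mp hmem).elim (fun ⟨h1, h2⟩ => d75 h1) (fun ⟨h1, h2⟩ => d76 h1)⟩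
  have p5 : ReachE (C \ {s(v5, v6)}) v5 v6 :=
    Relation.ReflTransGen.head q5_1 (Relation.ReflTransGen.head q5_2 (Relation.ReflTransGen.head q5_3 (Relation.ReflTransGen.head q5_4 (Relation.ReflTransGen.head q5_5 (Relation.ReflTransGen.head q5_6 (Relation.ReflTransGen.single q5_7))))))
  have q6_1 : s(v6, v5) ∈ C \ {s(v6, v7)} :=
    ⟨m_6_5, fun hmem => (Sym2.eq_iff.mp hmem).elim (fun ⟨h1, h2⟩ => d57 h2) (fun ⟨h1, h2⟩ => d67 h1)⟩
  have q6_2 : s(v5, v4) ∈ C \ {s(v6, v7)} :=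
    ⟨m_5_4, fun hmem => (Sym2.eq_iff.mp hmem).elim (fun ⟨h1, h2⟩ => d56 h1) (fun ⟨h1, h2⟩ => d57 h1)⟩
  have q6_3 : s(v4, v3) ∈ C \ {s(v6, v7)} :=
    ⟨m_4_3, fun hmem => (Sym2.eq_iff.mp hmem).elim (fun ⟨h1, h2⟩ => d46 h1) (fun ⟨h1, h2⟩ => d47 h1)⟩
  have q6_4 : s(v3, v2) ∈ C \ {s(v6, v7)} :=
    ⟨m_3_2, fun hmem => (Sym2.eq_iff.mp hmem).elim (fun ⟨h1, h2⟩ => d36 h1) (fun ⟨h1, h2⟩ => d37 h1)⟩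
  have q6_5 : s(v2, v1) ∈ C \ {s(v6, v7)} :=
    ⟨m_2_1, fun hmem => (Sym2.eq_iff.mp hmem).elim (fun ⟨h1, h2⟩ => d26 h1) (fun ⟨h1, h2⟩ => d27 h1)⟩
  have q6_6 : s(v1, v8) ∈ C \ {s(v6, v7)} :=
    ⟨m_1_8, fun hmem => (Sym2.eq_iff.mp hmem).elim (fun ⟨h1, h2⟩ => d16 h1) (fun ⟨h1, h2⟩ => d17 h1)⟩
  have q6_7 : s(v8, v7) ∈ C \ {s(v6, v7)} :=
    ⟨m_8_7, fun hmem => (Sym2.eq_iff.mp hmem).elim (fun ⟨h1, h2⟩ => d86 h1) (fun ⟨h1, h2⟩ => d87 h1)⟩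
  have p6 : ReachE (C \ {s(v6, v7)}) v6 v7 :=
    Relation.ReflTransGen.head q6_1 (Relation.ReflTransGen.head q6_2 (Relation.ReflTransGen.head q6_3 (Relation.ReflTransGen.head q6_4 (Relation.ReflTransGen.head q6_5 (Relation.ReflTransGen.head q6_6 (Relation.ReflTransGen.single q6_7))))))
  have q7_1 : s(v7, v6) ∈ C \ {s(v7, v8)} :=
    ⟨m_7_6, fun hmem => (Sym2.eq_iff.mp hmem).elim (fun ⟨h1, h2⟩ => d68 h2) (fun ⟨h1, h2⟩ => d78 h1)⟩
  have q7_2 : s(v6, v5) ∈ C \ {s(v7, v8)} :=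
    ⟨m_6_5, fun hmem => (Sym2.eq_iff.mp hmem).elim (fun ⟨h1, h2⟩ => d67 h1) (fun ⟨h1, h2⟩ => d68 h1)⟩
  have q7_3 : s(v5, v4) ∈ C \ {s(v7, v8)} :=
    ⟨m_5_4, fun hmem => (Sym2.eq_iff.mp hmem).elim (fun ⟨h1, h2⟩ => d57 h1) (fun ⟨h1, h2⟩ => d58 h1)⟩
  have q7_4 : s(v4, v3) ∈ C \ {s(v7, v8)} :=
    ⟨m_4_3, fun hmem => (Sym2.eq_iff.mp hmem).elim (fun ⟨h1, h2⟩ => d47 h1) (fun ⟨h1, h2⟩ => d48 h1)⟩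
  have q7_5 : s(v3, v2) ∈ C \ {s(v7, v8)} :=
    ⟨m_3_2, fun hmem => (Sym2.eq_iff.mp hmem).elim (fun ⟨h1, h2⟩ => d37 h1) (fun ⟨h1, h2⟩ => d38 h1)⟩
  have q7_6 : s(v2, v1) ∈ C \ {s(v7, v8)} :=
    ⟨m_2_1, fun hmem => (Sym2.eq_iff.mp hmem).elim (fun ⟨h1, h2⟩ => d27 h1) (fun ⟨h1, h2⟩ => d28 h1)⟩
  have q7_7 : s(v1, v8) ∈ C \ {s(v7, v8)} :=
    ⟨m_1_8, fun hmem => (Sym2.eq_iff.mp hmem).elim (fun ⟨h1, h2⟩ => d17 h1) (fun ⟨h1, h2⟩ => d18 h1)⟩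
  have p7 : ReachE (C \ {s(v7, v8)}) v7 v8 :=
    Relation.ReflTransGen.head q7_1 (Relation.ReflTransGen.head q7_2 (Relation.ReflTransGen.head q7_3 (Relation.ReflTransGen.head q7_4 (Relation.ReflTransGen.head q7_5 (Relation.ReflTransGen.head q7_6 (Relation.ReflTransGen.single q7_7))))))
  have q8_1 : s(v8, v7) ∈ C \ {s(v8, v1)} :=
    ⟨m_8_7, fun hmem => (Sym2.eq_iff.mp hmem).elim (fun ⟨h1, h2⟩ => d71 h2) (fun ⟨h1, h2⟩ => d81 h1)⟩
  have q8_2 : s(v7, v6) ∈ C \ {s(v8, v1)} :=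
    ⟨m_7_6, fun hmem => (Sym2.eq_iff.mp hmem).elim (fun ⟨h1, h2⟩ => d78 h1) (fun ⟨h1, h2⟩ => d71 h1)⟩
  have q8_3 : s(v6, v5) ∈ C \ {s(v8, v1)} :=
    ⟨m_6_5, fun hmem => (Sym2.eq_iff.mp hmem).elim (fun ⟨h1, h2⟩ => d68 h1) (fun ⟨h1, h2⟩ => d61 h1)⟩
  have q8_4 : s(v5, v4) ∈ C \ {s(v8, v1)} :=
    ⟨m_5_4, fun hmem => (Sym2.eq_iff.mp hmem).elim (fun ⟨h1, h2⟩ => d58 h1) (fun ⟨h1, h2⟩ => d51 h1)⟩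
  have q8_5 : s(v4, v3) ∈ C \ {s(v8, v1)} :=
    ⟨m_4_3, fun hmem => (Sym2.eq_iff.mp hmem).elim (fun ⟨h1, h2⟩ => d48 h1) (fun ⟨h1, h2⟩ => d41 h1)⟩
  have q8_6 : s(v3, v2) ∈ C \ {s(v8, v1)} :=
    ⟨m_3_2, fun hmem => (Sym2.eq_iff.mp hmem).elim (fun ⟨h1, h2⟩ => d38 h1) (fun ⟨h1, h2⟩ => d31 h1)⟩
  have q8_7 : s(v2, v1) ∈ C \ {s(v8, v1)} :=
    ⟨m_2_1, fun hmem => (Sym2.eq_iff.mp hmem).elim (fun ⟨h1, h2⟩ => d28 h1) (fun ⟨h1, h2⟩ => d21 h1)⟩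
  have p8 : ReachE (C \ {s(v8, v1)}) v8 v1 :=
    Relation.ReflTransGen.head q8_1 (Relation.ReflTransGen.head q8_2 (Relation.ReflTransGen.head q8_3 (Relation.ReflTransGen.head q8_4 (Relation.ReflTransGen.head q8_5 (Relation.ReflTransGen.head q8_6 (Relation.ReflTransGen.single q8_7))))))
  have h2ec : ∀ a b : V, s(a, b) ∈ C → ReachE (C \ {s(a, b)}) a b := by
    intro a b hab
    rw [hC] at hab
    simp only [Set.mem_insert_iff, Set.mem_singleton_iff] at hab
    rcases hab with h|h|h|h|h|h|h|h <;>
      rw [h] <;>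
      rcases Sym2.eq_iff.mp h with ⟨rfl, rfl⟩|⟨rfl, rfl⟩
    exacts [p1, reachE_symm p1, p2, reachE_symm p2, p3, reachE_symm p3, p4, reachE_symm p4, p5, reachE_symm p5, p6, reachE_symm p6, p7, reachE_symm p7, p8, reachE_symm p8]
  exact ⟨⟨hconn, h2ec⟩, hsupp⟩


set_option maxHeartbeats 1000000 in
/-- Merging two 4-cycles into an 8-cycle.  Let `H` be a 2-edge cover of a
2-edge-connected graph `G`, and let `C1 = a1-a2-a3-a4-a1` and `C2 = b1-b2-b3-b4-b1`
be two components of `H` that are 4-cycles.  Suppose `G` contains the edges `a1b1`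
and `a2b2`.  Then `(H \ {a1a2, b1b2}) ∪ {a1b1, a2b2}` is a 2-edge cover of `G` of the
same size as `H` in which the vertices of `C1` and `C2` form a single
2-edge-connected component that is a cycle on 8 vertices. -/
theorem merge_two_four_cycles (G : SimpleGraph V)
    (hG : TwoECSS (G.edgeSet : Set (Sym2 V)))
    (H : Set (Sym2 V)) (hHG : H ⊆ G.edgeSet)
    (hcover : ∀ v : V, 2 ≤ {e ∈ H | v ∈ e}.ncard)
    (a1 a2 a3 a4 b1 b2 b3 b4 : V)
    (hadist : List.Pairwise (· ≠ ·) [a1, a2, a3, a4])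
    (hbdist : List.Pairwise (· ≠ ·) [b1, b2, b3, b4])
    (C1 C2 : Set (Sym2 V))
    (hC1 : C1 = {s(a1, a2), s(a2, a3), s(a3, a4), s(a4, a1)})
    (hC2 : C2 = {s(b1, b2), s(b2, b3), s(b3, b4), s(b4, b1)})
    (hC1comp : IsComponent H C1) (hC2comp : IsComponent H C2)
    (hne : C1 ≠ C2)
    (he1 : s(a1, b1) ∈ G.edgeSet) (he2 : s(a2, b2) ∈ G.edgeSet) :
    ∀ H' : Set (Sym2 V),
      H' = (H \ {s(a1, a2), s(b1, b2)}) ∪ {s(a1, b1), s(a2, b2)} →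
      H' ⊆ G.edgeSet ∧
      (∀ v : V, 2 ≤ {e ∈ H' | v ∈ e}.ncard) ∧
      H'.ncard = H.ncard ∧
      ∃ C' : Set (Sym2 V), IsComponent H' C' ∧ TwoECSet C' ∧
        C' = {s(a2, a3), s(a3, a4), s(a4, a1), s(a1, b1),
              s(b1, b4), s(b4, b3), s(b3, b2), s(b2, a2)} ∧
        eSupport C' = {a1, a2, a3, a4, b1, b2, b3, b4} := by
  intro H' hH'
  subst hH'
  simp [List.pairwise_cons] at hadist hbdist
  obtain ⟨⟨ha12, ha13, ha14⟩, ⟨ha23, ha24⟩, ha34⟩ := hadist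
  obtain ⟨⟨hb12, hb13, hb14⟩, ⟨hb23, hb24⟩, hb34⟩ := hbdist
  have ha21 : a2 ≠ a1 := Ne.symm ha12
  have hb21 : b2 ≠ b1 := Ne.symm hb12
  have ha31 : a3 ≠ a1 := Ne.symm ha13
  have hb31 : b3 ≠ b1 := Ne.symm hb13
  have ha41 : a4 ≠ a1 := Ne.symm ha14
  have hb41 : b4 ≠ b1 := Ne.symm hb14
  have ha32 : a3 ≠ a2 := Ne.symm ha23
  have hb32 : b3 ≠ b2 := Ne.symm hb23
  have ha42 : a4 ≠ a2 := Ne.symm ha24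
  have hb42 : b4 ≠ b2 := Ne.symm hb24
  have ha43 : a4 ≠ a3 := Ne.symm ha34
  have hb43 : b4 ≠ b3 := Ne.symm hb34
  have hsC1 : eSupport C1 = {a1, a2, a3, a4} := by
    ext v
    constructor
    · rintro ⟨e, he, hv⟩
      rw [hC1] at he
      simp only [Set.mem_insert_iff, Set.mem_singleton_iff] at he
      rcases he with rfl|rfl|rfl|rfl <;> rw [Sym2.mem_iff] at hv <;>
        rcases hv with rfl|rfl <;> simp
    · intro hv
      simp only [Set.mem_insert_iff, Set.mem_singleton_iff] at hv
      rcases hv with h|h|h|h <;> subst v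
      exacts [⟨s(a1, a2), by rw [hC1]; simp, by simp⟩, ⟨s(a1, a2), by rw [hC1]; simp, by simp⟩,
        ⟨s(a3, a4), by rw [hC1]; simp, by simp⟩, ⟨s(a3, a4), by rw [hC1]; simp, by simp⟩]
  have hsC2 : eSupport C2 = {b1, b2, b3, b4} := by
    ext v
    constructor
    · rintro ⟨e, he, hv⟩
      rw [hC2] at he
      simp only [Set.mem_insert_iff, Set.mem_singleton_iff] at he
      rcases he with rfl|rfl|rfl|rfl <;> rw [Sym2.mem_iff] at hv <;>
        rcases hv with rfl|rfl <;> simp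
    · intro hv
      simp only [Set.mem_insert_iff, Set.mem_singleton_iff] at hv
      rcases hv with h|h|h|h <;> subst v
      exacts [⟨s(b1, b2), by rw [hC2]; simp, by simp⟩, ⟨s(b1, b2), by rw [hC2]; simp, by simp⟩,
        ⟨s(b3, b4), by rw [hC2]; simp, by simp⟩, ⟨s(b3, b4), by rw [hC2]; simp, by simp⟩]
  have hdisj : ∀ x ∈ ({a1, a2, a3, a4} : Set V), ∀ y ∈ ({b1, b2, b3, b4} : Set V), x ≠ y := by
    intro x hx y hy hxy
    subst hxy
    refine hne (comp_eq_of_mem hC1comp hC2comp (v := x) ?_ ?_)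
    · rw [hsC1]; exact hx
    · rw [hsC2]; exact hy
  have dab11 : a1 ≠ b1 := hdisj a1 (by simp) b1 (by simp)
  have dba11 : b1 ≠ a1 := Ne.symm dab11
  have dab12 : a1 ≠ b2 := hdisj a1 (by simp) b2 (by simp)
  have dba21 : b2 ≠ a1 := Ne.symm dab12
  have dab13 : a1 ≠ b3 := hdisj a1 (by simp) b3 (by simp)
  have dba31 : b3 ≠ a1 := Ne.symm dab13
  have dab14 : a1 ≠ b4 := hdisj a1 (by simp) b4 (by simp)
  have dba41 : b4 ≠ a1 := Ne.symm dab14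
  have dab21 : a2 ≠ b1 := hdisj a2 (by simp) b1 (by simp)
  have dba12 : b1 ≠ a2 := Ne.symm dab21
  have dab22 : a2 ≠ b2 := hdisj a2 (by simp) b2 (by simp)
  have dba22 : b2 ≠ a2 := Ne.symm dab22
  have dab23 : a2 ≠ b3 := hdisj a2 (by simp) b3 (by simp)
  have dba32 : b3 ≠ a2 := Ne.symm dab23
  have dab24 : a2 ≠ b4 := hdisj a2 (by simp) b4 (by simp)
  have dba42 : b4 ≠ a2 := Ne.symm dab24
  have dab31 : a3 ≠ b1 := hdisj a3 (by simp) b1 (by simp)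
  have dba13 : b1 ≠ a3 := Ne.symm dab31
  have dab32 : a3 ≠ b2 := hdisj a3 (by simp) b2 (by simp)
  have dba23 : b2 ≠ a3 := Ne.symm dab32
  have dab33 : a3 ≠ b3 := hdisj a3 (by simp) b3 (by simp)
  have dba33 : b3 ≠ a3 := Ne.symm dab33
  have dab34 : a3 ≠ b4 := hdisj a3 (by simp) b4 (by simp)
  have dba43 : b4 ≠ a3 := Ne.symm dab34
  have dab41 : a4 ≠ b1 := hdisj a4 (by simp) b1 (by simp)
  have dba14 : b1 ≠ a4 := Ne.symm dab41
  have dab42 : a4 ≠ b2 := hdisj a4 (by simp) b2 (by simp)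
  have dba24 : b2 ≠ a4 := Ne.symm dab42
  have dab43 : a4 ≠ b3 := hdisj a4 (by simp) b3 (by simp)
  have dba34 : b3 ≠ a4 := Ne.symm dab43
  have dab44 : a4 ≠ b4 := hdisj a4 (by simp) b4 (by simp)
  have dba44 : b4 ≠ a4 := Ne.symm dab44
  have ea12 : s(a1, a2) ∈ H := hC1comp.2.1 (by rw [hC1]; simp)
  have ea23 : s(a2, a3) ∈ H := hC1comp.2.1 (by rw [hC1]; simp)
  have ea34 : s(a3, a4) ∈ H := hC1comp.2.1 (by rw [hC1]; simp)
  have ea41 : s(a4, a1) ∈ H := hC1comp.2.1 (by rw [hC1]; simp)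
  have eb12 : s(b1, b2) ∈ H := hC2comp.2.1 (by rw [hC2]; simp)
  have eb23 : s(b2, b3) ∈ H := hC2comp.2.1 (by rw [hC2]; simp)
  have eb34 : s(b3, b4) ∈ H := hC2comp.2.1 (by rw [hC2]; simp)
  have eb41 : s(b4, b1) ∈ H := hC2comp.2.1 (by rw [hC2]; simp)
  have hf1H : s(a1, b1) ∉ H := by
    intro h
    have hnot : s(a1, b1) ∉ C1 := by
      rw [hC1]
      simp only [Set.mem_insert_iff, Set.mem_singleton_iff, Sym2.eq_iff]
      tauto
    exact (hC1comp.2.2.2 _ h hnot a1 (Sym2.mem_mk_left a1 b1)) (by rw [hsC1]; simp)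
  have hf2H : s(a2, b2) ∉ H := by
    intro h
    have hnot : s(a2, b2) ∉ C1 := by
      rw [hC1]
      simp only [Set.mem_insert_iff, Set.mem_singleton_iff, Sym2.eq_iff]
      tauto
    exact (hC1comp.2.2.2 _ h hnot a2 (Sym2.mem_mk_left a2 b2)) (by rw [hsC1]; simp)
  refine ⟨?_, ?_, ?_, ?_⟩
  · intro e he
    rcases he with ⟨heH, -⟩ | he
    · exact hHG heH
    · simp only [Set.mem_insert_iff, Set.mem_singleton_iff] at he
      rcases he with rfl | rfl
      exacts [he1, he2]
  · have hfinH : ∀ v : V, {e ∈ H | v ∈ e}.Finite := by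
      intro v
      by_contra hinf
      have h0 := Set.Infinite.ncard hinf
      have h2 := hcover v
      omega
    have hfin' : ∀ v : V,
        {e ∈ (H \ {s(a1, a2), s(b1, b2)}) ∪ {s(a1, b1), s(a2, b2)} | v ∈ e}.Finite := by
      intro v
      apply Set.Finite.subset ((hfinH v).union ((Set.finite_singleton _).insert _))
      rintro e ⟨he, hv⟩
      rcases he with ⟨heH, -⟩ | he
      · exact Or.inl ⟨heH, hv⟩
      · exact Or.inr he
    intro v
    by_cases hv1 : v = a1
    · subst v
      have hnp : s(a4, a1) ≠ s(a1, b1) := by simp only [ne_eq, Sym2.eq_iff]; tauto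
      have hp : ({s(a4, a1), s(a1, b1)} : Set (Sym2 V)) ⊆
          {e ∈ (H \ {s(a1, a2), s(b1, b2)}) ∪ {s(a1, b1), s(a2, b2)} | a1 ∈ e} := by
        intro e he
        simp only [Set.mem_insert_iff, Set.mem_singleton_iff] at he
        rcases he with rfl | rfl
        · exact ⟨Or.inl ⟨ea41, by simp only [Set.mem_insert_iff, Set.mem_singleton_iff,
            Sym2.eq_iff, not_or]; tauto⟩, by simp⟩
        · exact ⟨Or.inr (by simp), by simp⟩
      have hcard := Set.ncard_le_ncard hp (hfin' a1)
      rwa [Set.ncard_pair hnp] at hcard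
    · by_cases hv2 : v = a2
      · subst v
        have hnp : s(a2, a3) ≠ s(a2, b2) := by simp only [ne_eq, Sym2.eq_iff]; tauto
        have hp : ({s(a2, a3), s(a2, b2)} : Set (Sym2 V)) ⊆
            {e ∈ (H \ {s(a1, a2), s(b1, b2)}) ∪ {s(a1, b1), s(a2, b2)} | a2 ∈ e} := by
          intro e he
          simp only [Set.mem_insert_iff, Set.mem_singleton_iff] at he
          rcases he with rfl | rfl
          · exact ⟨Or.inl ⟨ea23, by simp only [Set.mem_insert_iff, Set.mem_singleton_iff,
              Sym2.eq_iff, not_or]; tauto⟩, by simp⟩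
          · exact ⟨Or.inr (by simp), by simp⟩
        have hcard := Set.ncard_le_ncard hp (hfin' a2)
        rwa [Set.ncard_pair hnp] at hcard
      · by_cases hv3 : v = b1
        · subst v
          have hnp : s(b4, b1) ≠ s(a1, b1) := by simp only [ne_eq, Sym2.eq_iff]; tauto
          have hp : ({s(b4, b1), s(a1, b1)} : Set (Sym2 V)) ⊆
              {e ∈ (H \ {s(a1, a2), s(b1, b2)}) ∪ {s(a1, b1), s(a2, b2)} | b1 ∈ e} := by
            intro e he
            simp only [Set.mem_insert_iff, Set.mem_singleton_iff] at he
            rcases he with rfl | rfl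
            · exact ⟨Or.inl ⟨eb41, by simp only [Set.mem_insert_iff, Set.mem_singleton_iff,
                Sym2.eq_iff, not_or]; tauto⟩, by simp⟩
            · exact ⟨Or.inr (by simp), by simp⟩
          have hcard := Set.ncard_le_ncard hp (hfin' b1)
          rwa [Set.ncard_pair hnp] at hcard
        · by_cases hv4 : v = b2
          · subst v
            have hnp : s(b2, b3) ≠ s(a2, b2) := by simp only [ne_eq, Sym2.eq_iff]; tauto
            have hp : ({s(b2, b3), s(a2, b2)} : Set (Sym2 V)) ⊆
                {e ∈ (H \ {s(a1, a2), s(b1, b2)}) ∪ {s(a1, b1), s(a2, b2)} | b2 ∈ e} := by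
              intro e he
              simp only [Set.mem_insert_iff, Set.mem_singleton_iff] at he
              rcases he with rfl | rfl
              · exact ⟨Or.inl ⟨eb23, by simp only [Set.mem_insert_iff, Set.mem_singleton_iff,
                  Sym2.eq_iff, not_or]; tauto⟩, by simp⟩
              · exact ⟨Or.inr (by simp), by simp⟩
            have hcard := Set.ncard_le_ncard hp (hfin' b2)
            rwa [Set.ncard_pair hnp] at hcard
          · have hsub : {e ∈ H | v ∈ e} ⊆
                {e ∈ (H \ {s(a1, a2), s(b1, b2)}) ∪ {s(a1, b1), s(a2, b2)} | v ∈ e} := by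
              rintro e ⟨heH, hv⟩
              refine ⟨Or.inl ⟨heH, ?_⟩, hv⟩
              simp only [Set.mem_insert_iff, Set.mem_singleton_iff, not_or]
              constructor
              · rintro rfl
                rw [Sym2.mem_iff] at hv
                rcases hv with rfl | rfl
                · exact hv1 rfl
                · exact hv2 rfl
              · rintro rfl
                rw [Sym2.mem_iff] at hv
                rcases hv with rfl | rfl
                · exact hv3 rfl
                · exact hv4 rfl
            exact le_trans (hcover v) (Set.ncard_le_ncard hsub (hfin' v))
  · have hkey : (H \ {s(a1, a2), s(b1, b2)}) ∪ {s(a1, b1), s(a2, b2)} =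
        insert s(a1, b1) ((insert s(a2, b2) (H \ {s(b1, b2)})) \ {s(a1, a2)}) := by
      ext e
      simp only [Set.mem_union, Set.mem_diff, Set.mem_insert_iff, Set.mem_singleton_iff, not_or]
      constructor
      · rintro (⟨he, hne1, hne2⟩ | (rfl | rfl))
        · exact Or.inr ⟨Or.inr ⟨he, hne2⟩, hne1⟩
        · exact Or.inl rfl
        · exact Or.inr ⟨Or.inl rfl, by simp only [Sym2.eq_iff]; tauto⟩
      · rintro (rfl | ⟨(rfl | ⟨he, hne2⟩), hne1⟩)
        · exact Or.inr (Or.inl rfl)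
        · exact Or.inr (Or.inr rfl)
        · exact Or.inl ⟨he, hne1, hne2⟩
    have h1 : s(a1, b1) ∉ insert s(a2, b2) (H \ {s(b1, b2)}) := by
      simp only [Set.mem_insert_iff, Set.mem_diff, Set.mem_singleton_iff, not_or]
      exact ⟨by simp only [Sym2.eq_iff]; tauto, fun hc => hf1H hc.1⟩
    have h2 : s(a1, a2) ∈ insert s(a2, b2) (H \ {s(b1, b2)}) :=
      Set.mem_insert_iff.mpr (Or.inr ⟨ea12, by
        simp only [Set.mem_singleton_iff, Sym2.eq_iff]; tauto⟩)
    rw [hkey, Set.ncard_exchange h1 h2, Set.ncard_exchange hf2H eb12]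
  · have hdall : List.Pairwise (· ≠ ·) [a2, a3, a4, a1, b1, b4, b3, b2] := by
      simp [List.pairwise_cons]
      exact ⟨⟨ha23, ha24, ha21, dab21, dab24, dab23, dab22⟩, ⟨ha34, ha31, dab31, dab34, dab33, dab32⟩, ⟨ha41, dab41, dab44, dab43, dab42⟩, ⟨dab11, dab14, dab13, dab12⟩, ⟨hb14, hb13, hb12⟩, ⟨hb43, hb42⟩, hb32⟩
    obtain ⟨htwo, hsupp⟩ := cycle8 a2 a3 a4 a1 b1 b4 b3 b2 hdall
      {s(a2, a3), s(a3, a4), s(a4, a1), s(a1, b1), s(b1, b4), s(b4, b3), s(b3, b2), s(b2, a2)} rfl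
    refine ⟨{s(a2, a3), s(a3, a4), s(a4, a1), s(a1, b1), s(b1, b4), s(b4, b3), s(b3, b2), s(b2, a2)},
      ⟨⟨s(a2, a3), by simp⟩, ?_, htwo.1, ?_⟩, htwo, rfl, ?_⟩
    · intro e he
      simp only [Set.mem_insert_iff, Set.mem_singleton_iff] at he
      rcases he with rfl|rfl|rfl|rfl|rfl|rfl|rfl|rfl
      · exact Or.inl ⟨ea23, by simp only [Set.mem_insert_iff, Set.mem_singleton_iff,
          Sym2.eq_iff, not_or]; tauto⟩
      · exact Or.inl ⟨ea34, by simp only [Set.mem_insert_iff, Set.mem_singleton_iff,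
          Sym2.eq_iff, not_or]; tauto⟩
      · exact Or.inl ⟨ea41, by simp only [Set.mem_insert_iff, Set.mem_singleton_iff,
          Sym2.eq_iff, not_or]; tauto⟩
      · exact Or.inr (by simp)
      · refine Or.inl ⟨?_, by simp only [Set.mem_insert_iff, Set.mem_singleton_iff,
          Sym2.eq_iff, not_or]; tauto⟩
        rw [Sym2.eq_swap]; exact eb41
      · refine Or.inl ⟨?_, by simp only [Set.mem_insert_iff, Set.mem_singleton_iff,
          Sym2.eq_iff, not_or]; tauto⟩
        rw [Sym2.eq_swap]; exact eb34
      · refine Or.inl ⟨?_, by simp only [Set.mem_insert_iff, Set.mem_singleton_iff,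
          Sym2.eq_iff, not_or]; tauto⟩
        rw [Sym2.eq_swap]; exact eb23
      · exact Or.inr (by simp [Sym2.eq_iff])
    · intro e heH' heC v hv hvs
      rw [hsupp] at hvs
      rcases heH' with ⟨heH, hrem⟩ | hadd
      · simp only [Set.mem_insert_iff, Set.mem_singleton_iff, not_or] at hrem
        have hvC : v ∈ eSupport C1 ∨ v ∈ eSupport C2 := by
          rw [hsC1, hsC2]
          simp only [Set.mem_insert_iff, Set.mem_singleton_iff] at hvs ⊢
          tauto
        rcases hvC with hvC | hvC
        · have heC1 : e ∈ C1 := by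
            by_contra hno
            exact hC1comp.2.2.2 e heH hno v hv hvC
          rw [hC1] at heC1
          simp only [Set.mem_insert_iff, Set.mem_singleton_iff] at heC1
          rcases heC1 with rfl|rfl|rfl|rfl
          · exact hrem.1 rfl
          · exact heC (by simp)
          · exact heC (by simp)
          · exact heC (by simp)
        · have heC2 : e ∈ C2 := by
            by_contra hno
            exact hC2comp.2.2.2 e heH hno v hv hvC
          rw [hC2] at heC2
          simp only [Set.mem_insert_iff, Set.mem_singleton_iff] at heC2
          rcases heC2 with rfl|rfl|rfl|rfl
          · exact hrem.2 rfl
          · exact heC (by simp [Sym2.eq_iff])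
          · exact heC (by simp [Sym2.eq_iff])
          · exact heC (by simp [Sym2.eq_iff])
      · simp only [Set.mem_insert_iff, Set.mem_singleton_iff] at hadd
        rcases hadd with rfl | rfl
        · exact heC (by simp)
        · exact heC (by simp [Sym2.eq_iff])
    · rw [hsupp]
      ext v
      simp only [Set.mem_insert_iff, Set.mem_singleton_iff]
      constructor <;> intro h <;> rcases h with h|h|h|h|h|h|h|h <;> subst v <;> simp
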